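/- Let p be a complex polynomial of degree at most d such that p(z) ≠ 0 for all z in the open unit disc 𝔻, and let b ∈ (0,1). Then for any complex number c₀ with exp(c₀) = p(0), there exists a holomorphic function g on the disc 𝔻_b = {z ∈ ℂ : |z| < b} such that exp(g(z)) = p(z) for all z ∈ 𝔻_b, g(0) = c₀, and |g(z)| ≤ d·ln(1/(1−b)) + |c₀| for all z ∈ 𝔻_b. (In the paper's terminology: p is M-zero-free on 𝔻_b with M = d·ln(1/(1−b)) + |log p(0)|.) -/

import Mathlib

open Metric Polynomial

/-- **Zero-freeness of nonvanishing polynomials on smaller discs.**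
If a complex polynomial `p` of degree at most `d` does not vanish on the open unit disc,
and `b ∈ (0,1)`, then for any branch value `c₀` with `exp c₀ = p 0`, there is a holomorphic
logarithm `g` of `p` on the disc of radius `b` with `g 0 = c₀` and
`|g z| ≤ d * ln (1/(1-b)) + |c₀|` throughout. -/
lemma norm_log_one_sub_le {w : ℂ} {b : ℝ} (hw : ‖w‖ ≤ b) (hb1 : b < 1) :
    ‖Complex.log (1 - w)‖ ≤ Real.log (1 / (1 - b)) := by
  have hw1 : ‖w‖ < 1 := lt_of_le_of_lt hw hb1
  have h1 := Complex.hasSum_taylorSeries_neg_log hw1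
  have h2 : HasSum (fun n : ℕ => ‖w‖ ^ n / n) (-Real.log (1 - ‖w‖)) := by
    have := Real.hasSum_pow_div_log_of_abs_lt_one (x := ‖w‖)
      (by rwa [abs_of_nonneg (norm_nonneg w)])
    have h3 := (hasSum_nat_add_iff (f := fun n : ℕ => ‖w‖ ^ n / n) 1).mp (by simpa using this)
    simpa using h3
  have hnorm : ∀ n : ℕ, ‖w ^ n / (n : ℂ)‖ = ‖w‖ ^ n / n := by
    intro n
    rw [norm_div, norm_pow, Complex.norm_natCast]
  have hbound : ‖Complex.log (1 - w)‖ ≤ -Real.log (1 - ‖w‖) := by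
    have := h1.norm_le_of_bounded h2 (fun n => le_of_eq (hnorm n))
    simpa using this
  refine hbound.trans ?_
  rw [one_div, Real.log_inv]
  have : Real.log (1 - b) ≤ Real.log (1 - ‖w‖) :=
    Real.log_le_log (by linarith) (by linarith)
  linarith

theorem polynomial_zero_free_on_disc
    (p : Polynomial ℂ) (d : ℕ) (hdeg : p.natDegree ≤ d)
    (hnz : ∀ z ∈ ball (0 : ℂ) 1, p.eval z ≠ 0)
    (b : ℝ) (hb0 : 0 < b) (hb1 : b < 1)
    (c₀ : ℂ) (hc₀ : Complex.exp c₀ = p.eval 0) :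
    ∃ g : ℂ → ℂ, DifferentiableOn ℂ g (ball (0 : ℂ) b) ∧
      (∀ z ∈ ball (0 : ℂ) b, Complex.exp (g z) = p.eval z) ∧
      g 0 = c₀ ∧
      ∀ z ∈ ball (0 : ℂ) b, ‖g z‖ ≤ d * Real.log (1 / (1 - b)) + ‖c₀‖ := by
  have hLpos : 0 ≤ Real.log (1 / (1 - b)) := by
    apply Real.log_nonneg
    rw [le_one_div (by norm_num) (by linarith)]
    linarith
  induction d generalizing p c₀ with
  | zero =>
    have hp0 : p = C (p.coeff 0) := eq_C_of_natDegree_eq_zero (le_antisymm hdeg (Nat.zero_le _))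
    refine ⟨fun _ => c₀, differentiableOn_const _, ?_, rfl, ?_⟩
    · intro z _
      rw [hc₀, hp0]; simp
    · intro z _
      simp
  | succ d ih =>
    by_cases h0 : p.natDegree = 0
    · have hp0 : p = C (p.coeff 0) := eq_C_of_natDegree_eq_zero h0
      refine ⟨fun _ => c₀, differentiableOn_const _, ?_, rfl, ?_⟩
      · intro z _
        rw [hc₀, hp0]; simp
      · intro z _
        have : (0:ℝ) ≤ (d+1 : ℕ) * Real.log (1 / (1 - b)) := by positivity
        push_cast at this ⊢
        linarith
    · -- p has a root r with ‖r‖ ≥ 1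
      have hpne : p ≠ 0 := fun h => hnz 0 (by simp) (by simp [h])
      obtain ⟨r, hr⟩ := Complex.exists_root (f := p)
        (natDegree_pos_iff_degree_pos.mp (Nat.pos_of_ne_zero h0))
      have hr1 : 1 ≤ ‖r‖ := by
        by_contra h
        exact hnz r (by simpa [mem_ball_zero_iff] using lt_of_not_ge h) hr
      have hrne : r ≠ 0 := fun h => by simp [h] at hr1; linarith
      set q := p /ₘ (X - C r) with hq
      have hpq : (X - C r) * q = p := (mul_divByMonic_eq_iff_isRoot).mpr hr
      have hqne : q ≠ 0 := by
        intro h; rw [h, mul_zero] at hpq; exact hpne hpq.symm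
      have hqdeg : q.natDegree ≤ d := by
        have := natDegree_mul (X_sub_C_ne_zero r) hqne
        rw [hpq, natDegree_X_sub_C] at this
        omega
      have hqnz : ∀ z ∈ ball (0 : ℂ) 1, q.eval z ≠ 0 := by
        intro z hz hq0
        exact hnz z hz (by rw [← hpq]; simp [hq0])
      set p₁ := C (-r) * q with hp₁
      have hp₁deg : p₁.natDegree ≤ d := le_trans (natDegree_C_mul_le _ _) hqdeg
      have hp₁nz : ∀ z ∈ ball (0 : ℂ) 1, p₁.eval z ≠ 0 := by
        intro z hz
        simp only [hp₁, eval_mul, eval_C]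
        exact mul_ne_zero (neg_ne_zero.mpr hrne) (hqnz z hz)
      have hp₁0 : p₁.eval 0 = p.eval 0 := by
        rw [← hpq]; simp [hp₁]
      obtain ⟨g₁, hg₁diff, hg₁exp, hg₁0, hg₁bd⟩ := ih p₁ hp₁deg hp₁nz c₀ (hc₀.trans hp₁0.symm)
      have hzr : ∀ z ∈ ball (0:ℂ) b, ‖z / r‖ < b := by
        intro z hz
        rw [norm_div]
        calc ‖z‖ / ‖r‖ ≤ ‖z‖ / 1 :=
              div_le_div_of_nonneg_left (norm_nonneg z) one_pos hr1
          _ < b := by rw [div_one]; exact mem_ball_zero_iff.mp hz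
      have hne : ∀ z ∈ ball (0:ℂ) b, (1 : ℂ) - z / r ≠ 0 := by
        intro z hz h
        have : ‖z / r‖ < 1 := lt_trans (hzr z hz) hb1
        have h1 : z / r = 1 := by linear_combination -h
        rw [h1] at this
        simp at this
      refine ⟨fun z => g₁ z + Complex.log (1 - z / r), ?_, ?_, ?_, ?_⟩
      · -- differentiability
        refine hg₁diff.add ?_
        intro z hz
        refine DifferentiableAt.differentiableWithinAt ?_
        refine DifferentiableAt.clog (by fun_prop) ?_
        rw [Complex.mem_slitPlane_iff]
        left
        have h2 : (z / r).re < 1 :=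
          lt_of_le_of_lt (le_trans (Complex.re_le_norm _) le_rfl)
            (lt_trans (hzr z hz) hb1)
        rw [Complex.sub_re, Complex.one_re]
        linarith
      · -- exponential identity
        intro z hz
        rw [Complex.exp_add, hg₁exp z hz, Complex.exp_log (hne z hz), ← hpq]
        simp only [hp₁, eval_mul, eval_C, eval_sub, eval_X]
        field_simp
        ring
      · simp [hg₁0]
      · intro z hz
        calc ‖g₁ z + Complex.log (1 - z / r)‖
            ≤ ‖g₁ z‖ + ‖Complex.log (1 - z / r)‖ := norm_add_le _ _
          _ ≤ (d * Real.log (1 / (1 - b)) + ‖c₀‖) + Real.log (1 / (1 - b)) :=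
              add_le_add (hg₁bd z hz) (norm_log_one_sub_le (le_of_lt (hzr z hz)) hb1)
          _ ≤ (d + 1 : ℕ) * Real.log (1 / (1 - b)) + ‖c₀‖ := by push_cast; linarith
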